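/- Let G be a finite solvable group, H a proper subgroup of G, and N an abelian normal subgroup of G with NH = G. Then H is a maximal subgroup of G if and only if there is no normal subgroup K of G with N ∩ H < K < N (i.e., if and only if N/(N ∩ H) is a chief factor of G; note N ∩ H is automatically normal in G under these hypotheses). -/

import Mathlib

/-- Let `G` be a finite solvable group, `H` a proper subgroup, and `N` an abelian normal
subgroup with `NH = G`. Then `H` is maximal in `G` if and only if `N/(N ∩ H)` is a chief
factor of `G`, i.e. there is no normal subgroup of `G` strictly between `N ⊓ H` and `N`. -/
theorem maximal_iff_chief_factor_over_inf
    (G : Type*) [Group G] [Finite G] [Group.IsSolvable G]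
    (H N : Subgroup G) (hH : H ≠ ⊤) (hN : N.Normal)
    (hab : ∀ a b : G, a ∈ N → b ∈ N → a * b = b * a)
    (hNH : ∀ g : G, ∃ n ∈ N, ∃ h ∈ H, g = n * h) :
    IsCoatom H ↔ ¬∃ K : Subgroup G, K.Normal ∧ N ⊓ H < K ∧ K < N := by
  constructor
  · rintro ⟨-, hmax⟩ ⟨K, hKn, h1, h2⟩
    have hKH : H < K ⊔ H := by
      refine lt_of_le_of_ne le_sup_right fun heq => ?_
      have hKle : K ≤ H := heq ▸ le_sup_left
      exact absurd (le_inf h2.le hKle) (not_le_of_gt h1)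
    have htop := hmax _ hKH
    have hNK : N ≤ K := by
      intro n hn
      have hmem : n ∈ ((K ⊔ H : Subgroup G) : Set G) := by
        rw [htop]; trivial
      rw [Subgroup.normal_mul] at hmem
      obtain ⟨k, hk, h, hh, rfl⟩ := hmem
      have hhN : h ∈ N := by
        have : k⁻¹ * (k * h) ∈ N := mul_mem (inv_mem (h2.le hk)) hn
        simpa using this
      exact mul_mem hk (h1.le ⟨hhN, hh⟩)
    exact absurd hNK (not_le_of_gt h2)
  · intro hnk
    refine ⟨hH, fun M hM => ?_⟩
    by_cases hNM : N ≤ M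
    · ext g
      simp only [Subgroup.mem_top, iff_true]
      obtain ⟨n, hn, h, hh, rfl⟩ := hNH g
      exact mul_mem (hNM hn) (hM.le hh)
    · exfalso
      have hKn : (N ⊓ M).Normal := by
        constructor
        intro x hx g
        obtain ⟨n, hn, h, hh, rfl⟩ := hNH g
        have hy : h * x * h⁻¹ ∈ N ⊓ M :=
          ⟨hN.conj_mem x hx.1 h,
           M.mul_mem (M.mul_mem (hM.le hh) hx.2) (M.inv_mem (hM.le hh))⟩
        have hre : (n * h) * x * (n * h)⁻¹ = n * (h * x * h⁻¹) * n⁻¹ := by group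
        have hcomm : n * (h * x * h⁻¹) * n⁻¹ = h * x * h⁻¹ := by
          rw [hab n _ hn hy.1]; group
        rw [hre, hcomm]
        exact hy
      have hKltN : N ⊓ M < N :=
        lt_of_le_of_ne inf_le_left fun e => hNM (by rw [← e]; exact inf_le_right)
      have hle : N ⊓ M ≤ N ⊓ H := by
        by_contra hcon
        exact hnk ⟨N ⊓ M, hKn,
          lt_of_le_of_ne (le_inf inf_le_left (inf_le_right.trans hM.le))
            (fun e => hcon (e ▸ le_rfl)), hKltN⟩
      have hMH : M ≤ H := by
        intro m hm
        obtain ⟨n, hn, h, hh, rfl⟩ := hNH m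
        have hnm : n ∈ M := by
          have : (n * h) * h⁻¹ ∈ M := M.mul_mem hm (M.inv_mem (hM.le hh))
          simpa using this
        exact H.mul_mem (hle ⟨hn, hnm⟩).2 hh
      exact absurd hMH (not_le_of_gt hM)
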